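/- arXiv:1506.07393 — 2 statements merged into one kernel-verified Lean document; each statement's English description precedes it below -/
import Mathlib

section
/- Let g : [0,∞) → ℝ be a positive, strictly increasing, differentiable function, let k > 0, let p be a positive integer, let q ∈ (0,1), and let λ > 0 and μ > 0 be real numbers. Then for all x, y with 0 < x < y, the following strict double inequality holds: g(0)^λ·k^{−(λ/k)(g(0)−g(x))}·e^{(λγ/k)(g(0)−g(x))}·Γ_k(g(0))^λ / (g(x)^λ·[p]_q^{−μ(g(0)−g(x))}·Γ_{(p,q)}(g(0))^μ) < Γ_k(g(x))^λ / Γ_{(p,q)}(g(x))^μ < g(y)^λ·k^{−(λ/k)(g(y)−g(x))}·e^{(λγ/k)(g(y)−g(x))}·Γ_k(g(y))^λ / (g(x)^λ·[p]_q^{−μ(g(y)−g(x))}·Γ_{(p,q)}(g(y))^μ). -/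
open Real Filter MeasureTheory

/-- `[p]_q = (1 - q^p)/(1 - q)` -/
noncomputable def pnq (p : ℕ) (q : ℝ) : ℝ := (1 - q ^ p) / (1 - q)

/-- q-psi function via its series representation. -/
noncomputable def psiq (q s : ℝ) : ℝ :=
  -Real.log (1 - q) + Real.log q * ∑' n : ℕ, q ^ (((n : ℝ) + 1) * s) / (1 - q ^ (n + 1))

/-- (p,q)-psi function via its series representation. -/
noncomputable def psipq (p : ℕ) (q s : ℝ) : ℝ :=
  Real.log (pnq p q) +
    Real.log q * ∑ n ∈ Finset.range p, q ^ (((n : ℝ) + 1) * s) / (1 - q ^ (n + 1))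

/-- k-psi function via its series representation. -/
noncomputable def psik (k s : ℝ) : ℝ :=
  (Real.log k - Real.eulerMascheroniConstant) / k - 1 / s +
    ∑' n : ℕ, s / (((n : ℝ) + 1) * k * (((n : ℝ) + 1) * k + s))

/-- (q,k)-psi function via its series representation. -/
noncomputable def psiqk (q k s : ℝ) : ℝ :=
  -Real.log (1 - q) / k +
    Real.log q * ∑' n : ℕ, q ^ (((n : ℝ) + 1) * k * s) / (1 - q ^ (((n : ℝ) + 1) * k))

/-- Normalized q-Gamma function. -/
noncomputable def Gammaq (q s : ℝ) : ℝ :=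
  (1 - q) ^ (-s) *
    Real.exp (∑' n : ℕ, q ^ (((n : ℝ) + 1) * s) / (((n : ℝ) + 1) * (1 - q ^ (n + 1))))

/-- Normalized (p,q)-Gamma function. -/
noncomputable def Gammapq (p : ℕ) (q s : ℝ) : ℝ :=
  (pnq p q) ^ s *
    Real.exp (∑ n ∈ Finset.range p, q ^ (((n : ℝ) + 1) * s) / (((n : ℝ) + 1) * (1 - q ^ (n + 1))))

/-- Normalized (q,k)-Gamma function. -/
noncomputable def Gammaqk (q k s : ℝ) : ℝ :=
  (1 - q) ^ (-s / k) *
    Real.exp (∑' n : ℕ,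
      q ^ (((n : ℝ) + 1) * k * s) / (((n : ℝ) + 1) * k * (1 - q ^ (((n : ℝ) + 1) * k))))

/-- k-Gamma function. -/
noncomputable def Gammak (k s : ℝ) : ℝ :=
  ∫ x in Set.Ioi (0 : ℝ), Real.exp (-(x ^ k) / k) * x ^ (s - 1)

lemma Gammak_eq {k s : ℝ} (hk : 0 < k) (hs : 0 < s) :
    Gammak k s = k ^ (s / k - 1) * Real.Gamma (s / k) := by
  have h := integral_rpow_mul_exp_neg_mul_rpow (p := k) (q := s - 1) (b := k⁻¹)
    hk (by linarith) (by positivity)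
  have h2 : Gammak k s = ∫ x in Set.Ioi (0 : ℝ), x ^ (s - 1) * exp (-k⁻¹ * x ^ k) := by
    unfold Gammak
    refine setIntegral_congr_fun measurableSet_Ioi (fun x hx => ?_)
    rw [mul_comm]
    congr 1
    field_simp
  rw [h2, h]
  rw [← Real.rpow_neg_one k, ← Real.rpow_mul hk.le]
  have e1 : (-1 : ℝ) * (-(s - 1 + 1) / k) = s / k := by field_simp; ring
  have e2 : s - 1 + 1 = s := by ring
  rw [e1, e2, Real.rpow_sub hk, Real.rpow_one]
  ring


noncomputable def eulf (t : ℝ) (j : ℕ) : ℝ :=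
  Real.exp (t / (j + 1)) * ((j + 1) / (t + (j + 1)))

noncomputable def eulP (t : ℝ) (n : ℕ) : ℝ := ∏ j ∈ Finset.range n, eulf t j

lemma eulP_eq (t : ℝ) (n : ℕ) :
    eulP t n = Real.exp (t * (harmonic n : ℝ)) * (n.factorial : ℝ) /
      ∏ j ∈ Finset.range n, (t + (j + 1)) := by
  unfold eulP eulf
  rw [Finset.prod_mul_distrib, ← Real.exp_sum, Finset.prod_div_distrib, mul_div_assoc]
  congr 2
  · rw [harmonic]
    push_cast
    rw [Finset.mul_sum]
    exact Finset.sum_congr rfl fun j _ => by rw [div_eq_mul_inv]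
  · rw [← Finset.prod_range_add_one_eq_factorial]
    push_cast
    rfl

lemma eulP_tendsto {t : ℝ} (ht : 0 ≤ t) :
    Tendsto (eulP t) atTop
      (nhds (Real.exp (Real.eulerMascheroniConstant * t) * Real.Gamma (t + 1))) := by
  have h1 : Tendsto (fun n : ℕ => Real.exp (t * ((harmonic n : ℝ) - Real.log n))) atTop
      (nhds (Real.exp (t * Real.eulerMascheroniConstant))) :=
    (Real.continuous_exp.tendsto _).comp (Real.tendsto_harmonic_sub_log.const_mul t)
  have h2 := Real.GammaSeq_tendsto_Gamma (t + 1)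
  have h3 : Tendsto (fun n : ℕ => 1 + (t + 1) / (n : ℝ)) atTop (nhds (1 + 0)) :=
    tendsto_const_nhds.add (tendsto_const_nhds.div_atTop tendsto_natCast_atTop_atTop)
  have hcomb := (h1.mul h2).mul h3
  have heq : ∀ᶠ n : ℕ in atTop,
      Real.exp (t * ((harmonic n : ℝ) - Real.log n)) * Real.GammaSeq (t + 1) n *
        (1 + (t + 1) / (n : ℝ)) = eulP t n := by
    filter_upwards [eventually_ge_atTop 1] with n hn
    have hn' : (0 : ℝ) < n := by exact_mod_cast hn
    have hprod : (0 : ℝ) < ∏ j ∈ Finset.range n, (t + (j + 1)) :=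
      Finset.prod_pos fun j _ => by positivity
    rw [eulP_eq, Real.GammaSeq]
    have hfac : (∏ j ∈ Finset.range (n + 1), (t + 1 + (j : ℝ))) =
        (∏ j ∈ Finset.range n, (t + (j + 1))) * (t + 1 + n) := by
      rw [Finset.prod_range_succ]
      congr 1
      exact Finset.prod_congr rfl fun j _ => by ring
    rw [hfac]
    have hrp : (n : ℝ) ^ (t + 1) = (n : ℝ) ^ t * n := by
      rw [Real.rpow_add hn', Real.rpow_one]
    have hexp : Real.exp (t * ((harmonic n : ℝ) - Real.log n)) =
        Real.exp (t * (harmonic n : ℝ)) / (n : ℝ) ^ t := by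
      rw [mul_sub, Real.exp_sub, Real.rpow_def_of_pos hn', mul_comm (Real.log n) t]
    rw [hrp, hexp]
    have hnt : (0 : ℝ) < (n : ℝ) ^ t := Real.rpow_pos_of_pos hn' t
    field_simp
    ring
  have := hcomb.congr' heq
  simpa [mul_comm] using this

lemma eulf_pos {t : ℝ} (ht : 0 ≤ t) (j : ℕ) : 0 < eulf t j := by
  unfold eulf; positivity

lemma eulf_le {a b : ℝ} (ha : 0 ≤ a) (hab : a ≤ b) (j : ℕ) : eulf a j ≤ eulf b j := by
  unfold eulf
  set c : ℝ := (j : ℝ) + 1 with hc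
  have hc0 : 0 < c := by positivity
  have hac : 0 < a + c := by linarith
  have hbc : 0 < b + c := by linarith
  rw [← mul_div_assoc, ← mul_div_assoc, div_le_div_iff₀ hac hbc]
  have h1 : Real.exp (a / c) * (1 + (b - a) / c) ≤ Real.exp (b / c) := by
    have he : Real.exp (b / c) = Real.exp (a / c) * Real.exp ((b - a) / c) := by
      rw [← Real.exp_add]; congr 1; field_simp; ring
    rw [he]
    have := Real.add_one_le_exp ((b - a) / c)
    nlinarith [Real.exp_pos (a / c)]
  have h2 : b + c ≤ (1 + (b - a) / c) * (a + c) := by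
    have he : (1 + (b - a) / c) * (a + c) = (b + c) + (b - a) * a / c := by
      field_simp; ring
    rw [he]
    have : 0 ≤ (b - a) * a / c :=
      div_nonneg (mul_nonneg (by linarith) ha) hc0.le
    linarith
  have key : Real.exp (a / c) * (b + c) ≤ Real.exp (b / c) * (a + c) := by
    calc Real.exp (a / c) * (b + c) ≤ Real.exp (a / c) * ((1 + (b - a) / c) * (a + c)) := by
          nlinarith [Real.exp_pos (a / c)]
      _ = Real.exp (a / c) * (1 + (b - a) / c) * (a + c) := by ring
      _ ≤ Real.exp (b / c) * (a + c) := mul_le_mul_of_nonneg_right h1 hac.le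
  nlinarith [key, hc0]

lemma eulf_lt_zero' {a b : ℝ} (ha : 0 ≤ a) (hab : a < b) : eulf a 0 < eulf b 0 := by
  unfold eulf
  have ha1 : (0:ℝ) < a + ((0:ℕ) + 1) := by push_cast; linarith
  have hb1 : (0:ℝ) < b + ((0:ℕ) + 1) := by push_cast; linarith
  rw [← mul_div_assoc, ← mul_div_assoc, div_lt_div_iff₀ ha1 hb1]
  norm_num
  have h1 : Real.exp a * (1 + (b - a)) < Real.exp b := by
    have he : Real.exp b = Real.exp a * Real.exp (b - a) := by
      rw [← Real.exp_add]; ring_nf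
    rw [he]
    have := Real.add_one_lt_exp (x := b - a) (by linarith)
    nlinarith [Real.exp_pos a]
  have h2 : (b + 1) ≤ (1 + (b - a)) * (a + 1) := by nlinarith
  calc Real.exp a * (b + 1) ≤ Real.exp a * ((1 + (b - a)) * (a + 1)) := by
        nlinarith [Real.exp_pos a]
    _ = Real.exp a * (1 + (b - a)) * (a + 1) := by ring
    _ < Real.exp b * (a + 1) := by
        have := Real.exp_pos a
        nlinarith

lemma eulP_ratio_le {a b : ℝ} (ha : 0 ≤ a) (hab : a ≤ b) {n : ℕ} (hn : 1 ≤ n) :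
    eulP a n * (eulf b 0 / eulf a 0) ≤ eulP b n := by
  have hb : 0 ≤ b := ha.trans hab
  obtain ⟨m, rfl⟩ := Nat.exists_eq_add_of_le hn
  have hprodle : (∏ j ∈ Finset.range m, eulf a (j + 1)) ≤
      ∏ j ∈ Finset.range m, eulf b (j + 1) :=
    Finset.prod_le_prod (fun j _ => (eulf_pos ha _).le) (fun j _ => eulf_le ha hab _)
  have e1 : eulP a (1 + m) = eulf a 0 * ∏ j ∈ Finset.range m, eulf a (j + 1) := by
    unfold eulP
    rw [add_comm 1 m, Finset.prod_range_succ']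
    ring
  have e2 : eulP b (1 + m) = eulf b 0 * ∏ j ∈ Finset.range m, eulf b (j + 1) := by
    unfold eulP
    rw [add_comm 1 m, Finset.prod_range_succ']
    ring
  rw [e1, e2]
  have ha0 : 0 < eulf a 0 := eulf_pos ha 0
  have hb0 : 0 < eulf b 0 := eulf_pos hb 0
  rw [div_eq_mul_inv]
  calc eulf a 0 * (∏ j ∈ Finset.range m, eulf a (j + 1)) * (eulf b 0 * (eulf a 0)⁻¹)
      = eulf b 0 * (∏ j ∈ Finset.range m, eulf a (j + 1)) * (eulf a 0 * (eulf a 0)⁻¹) := by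
        ring
    _ = eulf b 0 * ∏ j ∈ Finset.range m, eulf a (j + 1) := by
        rw [mul_inv_cancel₀ ha0.ne', mul_one]
    _ ≤ eulf b 0 * ∏ j ∈ Finset.range m, eulf b (j + 1) :=
        mul_le_mul_of_nonneg_left hprodle hb0.le

lemma exp_gamma_strictMono {a b : ℝ} (ha : 0 ≤ a) (hab : a < b) :
    Real.exp (Real.eulerMascheroniConstant * a) * Real.Gamma (a + 1) <
      Real.exp (Real.eulerMascheroniConstant * b) * Real.Gamma (b + 1) := by
  set La := Real.exp (Real.eulerMascheroniConstant * a) * Real.Gamma (a + 1) with hLa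
  set Lb := Real.exp (Real.eulerMascheroniConstant * b) * Real.Gamma (b + 1) with hLb
  have hLapos : 0 < La := by
    have := Real.Gamma_pos_of_pos (show (0:ℝ) < a + 1 by linarith)
    positivity
  have hratio : 1 < eulf b 0 / eulf a 0 :=
    (one_lt_div (eulf_pos ha 0)).mpr (eulf_lt_zero' ha hab)
  have hle : La * (eulf b 0 / eulf a 0) ≤ Lb := by
    refine le_of_tendsto_of_tendsto ((eulP_tendsto ha).mul_const _)
      (eulP_tendsto (ha.trans hab.le)) ?_
    filter_upwards [eventually_ge_atTop 1] with n hn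
    exact eulP_ratio_le ha hab.le hn
  calc La = La * 1 := (mul_one La).symm
    _ < La * (eulf b 0 / eulf a 0) := by
        exact mul_lt_mul_of_pos_left hratio hLapos
    _ ≤ Lb := hle

noncomputable def auxS (p : ℕ) (q s : ℝ) : ℝ :=
  ∑ n ∈ Finset.range p, q ^ (((n : ℝ) + 1) * s) / (((n : ℝ) + 1) * (1 - q ^ (n + 1)))

lemma Gammapq_eq (p : ℕ) (q s : ℝ) :
    Gammapq p q s = (pnq p q) ^ s * Real.exp (auxS p q s) := rfl

noncomputable def auxA (k : ℝ) (p : ℕ) (q lam mu s : ℝ) : ℝ :=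
  (Real.exp (Real.eulerMascheroniConstant * (s / k)) * Real.Gamma (s / k + 1)) ^ lam *
    Real.exp (-(mu * auxS p q s))

noncomputable def auxD (k : ℝ) (p : ℕ) (q lam mu s : ℝ) : ℝ :=
  s ^ lam * k ^ (-(lam / k * s)) * Real.exp (lam * Real.eulerMascheroniConstant / k * s) /
    (pnq p q) ^ (-(mu * s))

lemma pnq_pos {p : ℕ} (hp : 0 < p) {q : ℝ} (hq0 : 0 < q) (hq1 : q < 1) : 0 < pnq p q := by
  unfold pnq
  have h1 : q ^ p < 1 := pow_lt_one₀ hq0.le hq1 hp.ne'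
  have h2 : (0:ℝ) < 1 - q := by linarith
  have h3 : (0:ℝ) < 1 - q ^ p := by linarith
  positivity

lemma bridge {k q lam mu s : ℝ} {p : ℕ} (hk : 0 < k) (hp : 0 < p) (hq0 : 0 < q)
    (hq1 : q < 1) (hs : 0 < s) :
    Gammak k s ^ lam / Gammapq p q s ^ mu = auxA k p q lam mu s / auxD k p q lam mu s := by
  have ht : 0 < s / k := div_pos hs hk
  have hpnq : 0 < pnq p q := pnq_pos hp hq0 hq1
  have hG : 0 < Real.Gamma (s / k) := Real.Gamma_pos_of_pos ht
  have hkr : 0 < k ^ (s / k - 1) := Real.rpow_pos_of_pos hk _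
  have hpr : 0 < (pnq p q) ^ s := Real.rpow_pos_of_pos hpnq _
  rw [Gammak_eq hk hs, Gammapq_eq]
  unfold auxA auxD
  rw [Real.Gamma_add_one ht.ne']
  have htG : (0:ℝ) < s / k * Real.Gamma (s / k) := mul_pos ht hG
  simp only [Real.rpow_def_of_pos hk, Real.rpow_def_of_pos hs, Real.rpow_def_of_pos hpnq]
  rw [Real.rpow_def_of_pos (mul_pos (Real.exp_pos _) hG),
    Real.rpow_def_of_pos (mul_pos (Real.exp_pos _) (Real.exp_pos _)),
    Real.rpow_def_of_pos (mul_pos (Real.exp_pos _) htG),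
    Real.log_mul (Real.exp_ne_zero _) hG.ne',
    Real.log_mul (Real.exp_ne_zero _) (Real.exp_ne_zero _),
    Real.log_mul (Real.exp_ne_zero _) htG.ne',
    Real.log_mul ht.ne' hG.ne', Real.log_div hs.ne' hk.ne']
  simp only [Real.log_exp]
  simp only [div_eq_mul_inv, ← Real.exp_neg, ← Real.exp_add]
  rw [Real.exp_eq_exp]
  field_simp
  ring

lemma auxS_lt {p : ℕ} (hp : 0 < p) {q a b : ℝ} (hq0 : 0 < q) (hq1 : q < 1)
    (hab : a < b) : auxS p q b < auxS p q a := by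
  unfold auxS
  refine Finset.sum_lt_sum_of_nonempty (Finset.nonempty_range_iff.mpr hp.ne') ?_
  intro n _
  have hd : (0:ℝ) < ((n : ℝ) + 1) * (1 - q ^ (n + 1)) := by
    have h1 : q ^ (n + 1) < 1 := pow_lt_one₀ hq0.le hq1 (Nat.succ_ne_zero n)
    have : (0:ℝ) < (n:ℝ) + 1 := by positivity
    nlinarith
  have hnum : q ^ (((n : ℝ) + 1) * b) < q ^ (((n : ℝ) + 1) * a) := by
    refine Real.rpow_lt_rpow_of_exponent_gt hq0 hq1 ?_
    have : (0:ℝ) < (n:ℝ) + 1 := by positivity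
    nlinarith
  exact (div_lt_div_iff_of_pos_right hd).mpr hnum

lemma auxA_lt {k q lam mu : ℝ} {p : ℕ} (hk : 0 < k) (hp : 0 < p) (hq0 : 0 < q)
    (hq1 : q < 1) (hlam : 0 < lam) (hmu : 0 < mu) {a b : ℝ} (ha : 0 < a) (hab : a < b) :
    auxA k p q lam mu a < auxA k p q lam mu b := by
  unfold auxA
  have htab : a / k < b / k := div_lt_div_of_pos_right hab hk
  have hX : (Real.exp (Real.eulerMascheroniConstant * (a / k)) * Real.Gamma (a / k + 1)) ^ lam <
      (Real.exp (Real.eulerMascheroniConstant * (b / k)) * Real.Gamma (b / k + 1)) ^ lam := by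
    have hbase : 0 < Real.exp (Real.eulerMascheroniConstant * (a / k)) * Real.Gamma (a / k + 1) := by
      have := Real.Gamma_pos_of_pos (show (0:ℝ) < a / k + 1 by positivity)
      positivity
    exact Real.rpow_lt_rpow hbase.le
      (exp_gamma_strictMono (div_nonneg ha.le hk.le) htab) hlam
  have hY : Real.exp (-(mu * auxS p q a)) < Real.exp (-(mu * auxS p q b)) := by
    have := auxS_lt hp hq0 hq1 hab (q := q)
    have h2 : -(mu * auxS p q a) < -(mu * auxS p q b) := by nlinarith
    exact Real.exp_lt_exp.mpr h2
  have hXpos : (0:ℝ) < (Real.exp (Real.eulerMascheroniConstant * (a / k)) * Real.Gamma (a / k + 1)) ^ lam := by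
    have := Real.Gamma_pos_of_pos (show (0:ℝ) < a / k + 1 by positivity)
    positivity
  exact mul_lt_mul'' hX hY hXpos.le (Real.exp_pos _).le

lemma auxD_pos {k q lam mu : ℝ} {p : ℕ} (hk : 0 < k) (hp : 0 < p) (hq0 : 0 < q)
    (hq1 : q < 1) {s : ℝ} (hs : 0 < s) : 0 < auxD k p q lam mu s := by
  have hpnq : 0 < pnq p q := pnq_pos hp hq0 hq1
  unfold auxD
  positivity

lemma Eeq {k q lam mu : ℝ} {p : ℕ} (hk : 0 < k) (hp : 0 < p) (hq0 : 0 < q)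
    (hq1 : q < 1) {u w : ℝ} (hu : 0 < u) (hw : 0 < w) :
    u ^ lam * k ^ (-(lam / k * (u - w))) *
        Real.exp (lam * Real.eulerMascheroniConstant / k * (u - w)) * (Gammak k u) ^ lam /
        (w ^ lam * (pnq p q) ^ (-(mu * (u - w))) * (Gammapq p q u) ^ mu) =
      auxA k p q lam mu u / auxD k p q lam mu w := by
  have hpnq : 0 < pnq p q := pnq_pos hp hq0 hq1
  have hDu : 0 < auxD k p q lam mu u := auxD_pos hk hp hq0 hq1 hu
  have hDw : 0 < auxD k p q lam mu w := auxD_pos hk hp hq0 hq1 hw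
  have hGpq : 0 < Gammapq p q u := by
    rw [Gammapq_eq]
    positivity
  have hA : auxA k p q lam mu u =
      Gammak k u ^ lam / Gammapq p q u ^ mu * auxD k p q lam mu u := by
    rw [bridge hk hp hq0 hq1 hu]
    field_simp
  rw [hA]
  have e1 : k ^ (-(lam / k * (u - w))) = k ^ (-(lam / k * u)) / k ^ (-(lam / k * w)) := by
    rw [show -(lam / k * (u - w)) = -(lam / k * u) - -(lam / k * w) by ring,
      Real.rpow_sub hk]
  have e2 : (pnq p q) ^ (-(mu * (u - w))) =
      (pnq p q) ^ (-(mu * u)) / (pnq p q) ^ (-(mu * w)) := by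
    rw [show -(mu * (u - w)) = -(mu * u) - -(mu * w) by ring, Real.rpow_sub hpnq]
  have e3 : Real.exp (lam * Real.eulerMascheroniConstant / k * (u - w)) =
      Real.exp (lam * Real.eulerMascheroniConstant / k * u) /
        Real.exp (lam * Real.eulerMascheroniConstant / k * w) := by
    rw [← Real.exp_sub]
    ring_nf
  rw [e1, e2, e3]
  unfold auxD
  have h1 : (0:ℝ) < u ^ lam := Real.rpow_pos_of_pos hu _
  have h2 : (0:ℝ) < w ^ lam := Real.rpow_pos_of_pos hw _
  have h3 : (0:ℝ) < k ^ (-(lam / k * u)) := Real.rpow_pos_of_pos hk _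
  have h4 : (0:ℝ) < k ^ (-(lam / k * w)) := Real.rpow_pos_of_pos hk _
  have h5 : (0:ℝ) < (pnq p q) ^ (-(mu * u)) := Real.rpow_pos_of_pos hpnq _
  have h6 : (0:ℝ) < (pnq p q) ^ (-(mu * w)) := Real.rpow_pos_of_pos hpnq _
  have h7 : (0:ℝ) < Gammapq p q u ^ mu := Real.rpow_pos_of_pos hGpq _
  field_simp

theorem stmt6 (g : ℝ → ℝ) (hgpos : ∀ t ∈ Set.Ici (0 : ℝ), 0 < g t)
    (hgmono : StrictMonoOn g (Set.Ici (0 : ℝ)))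
    (hgdiff : DifferentiableOn ℝ g (Set.Ici (0 : ℝ)))
    (k : ℝ) (hk : 0 < k) (p : ℕ) (hp : 0 < p) (q : ℝ) (hq : q ∈ Set.Ioo (0 : ℝ) 1)
    (lam mu : ℝ) (hlam : 0 < lam) (hmu : 0 < mu)
    (x y : ℝ) (hx : 0 < x) (hxy : x < y) :
    (g 0) ^ lam * k ^ (-(lam / k * (g 0 - g x))) *
        Real.exp (lam * Real.eulerMascheroniConstant / k * (g 0 - g x)) *
        (Gammak k (g 0)) ^ lam /
        ((g x) ^ lam * (pnq p q) ^ (-(mu * (g 0 - g x))) * (Gammapq p q (g 0)) ^ mu) <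
      (Gammak k (g x)) ^ lam / (Gammapq p q (g x)) ^ mu ∧
    (Gammak k (g x)) ^ lam / (Gammapq p q (g x)) ^ mu <
      (g y) ^ lam * k ^ (-(lam / k * (g y - g x))) *
        Real.exp (lam * Real.eulerMascheroniConstant / k * (g y - g x)) *
        (Gammak k (g y)) ^ lam /
        ((g x) ^ lam * (pnq p q) ^ (-(mu * (g y - g x))) * (Gammapq p q (g y)) ^ mu) := by
  obtain ⟨hq0, hq1⟩ := hq
  have h0 : 0 < g 0 := hgpos 0 (Set.mem_Ici.mpr le_rfl)
  have hgx : 0 < g x := hgpos x (Set.mem_Ici.mpr hx.le)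
  have hgy : 0 < g y := hgpos y (Set.mem_Ici.mpr (hx.trans hxy).le)
  have h0x : g 0 < g x := hgmono (Set.mem_Ici.mpr le_rfl) (Set.mem_Ici.mpr hx.le) hx
  have hxy2 : g x < g y :=
    hgmono (Set.mem_Ici.mpr hx.le) (Set.mem_Ici.mpr (hx.trans hxy).le) hxy
  have hDx : 0 < auxD k p q lam mu (g x) := auxD_pos hk hp hq0 hq1 hgx
  constructor
  · rw [Eeq hk hp hq0 hq1 h0 hgx, bridge hk hp hq0 hq1 hgx]
    exact (div_lt_div_iff_of_pos_right hDx).mpr (auxA_lt hk hp hq0 hq1 hlam hmu h0 h0x)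
  · rw [Eeq hk hp hq0 hq1 hgy hgx, bridge hk hp hq0 hq1 hgx]
    exact (div_lt_div_iff_of_pos_right hDx).mpr (auxA_lt hk hp hq0 hq1 hlam hmu hgx hxy2)
end

section
/- Let g : [0,∞) → ℝ be a positive, increasing, differentiable function, let q ∈ (0,1), let k ≥ 1, and let λ ≥ μ > 0 be real numbers. Then the function H(t) = (1−q)^{λ g(t) − (μ/k) g(t)}·Γ_q(g(t))^λ / Γ_{(q,k)}(g(t))^μ is non-increasing on [0,∞); that is, for all 0 ≤ s ≤ t we have H(s) ≥ H(t). -/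
open Real

lemma myKey (c k m : ℝ) (hc0 : 0 < c) (hc1 : c < 1) (hk : 1 ≤ k) (hm : 0 < m)
    {a b : ℝ} (ha : 0 ≤ a) (hab : a ≤ b) :
    c ^ b / (m * (1 - c)) + c ^ (k * a) / (m * k * (1 - c ^ k))
      ≤ c ^ a / (m * (1 - c)) + c ^ (k * b) / (m * k * (1 - c ^ k)) := by
  have hk0 : 0 < k := lt_of_lt_of_le one_pos hk
  have hd1 : 0 < 1 - c := by linarith
  have hck : c ^ k < 1 := Real.rpow_lt_one hc0.le hc1 hk0
  have hd2 : 0 < 1 - c ^ k := by linarith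
  set f : ℝ → ℝ := fun x => c ^ x / (m * (1 - c)) - c ^ (k * x) / (m * k * (1 - c ^ k)) with hf
  have hder : ∀ x : ℝ, HasDerivAt f
      (c ^ x * Real.log c / (m * (1 - c)) - c ^ (k * x) * Real.log c * k / (m * k * (1 - c ^ k))) x := by
    intro x
    have h1 := (Real.hasStrictDerivAt_const_rpow hc0 x).hasDerivAt
    have h2 : HasDerivAt (fun x => c ^ (k * x)) (c ^ (k * x) * Real.log c * k) x := by
      have := ((Real.hasStrictDerivAt_const_rpow hc0 (k * x)).hasDerivAt).comp x
        ((hasDerivAt_id x).const_mul k)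
      simpa [Function.comp_def, mul_comm, mul_assoc, mul_one] using this
    exact (h1.div_const _).sub (h2.div_const _)
  have hanti : AntitoneOn f (Set.Ici (0:ℝ)) := by
    apply antitoneOn_of_deriv_nonpos (convex_Ici 0)
    · exact fun x _ => (hder x).continuousAt.continuousWithinAt
    · exact fun x _ => (hder x).differentiableAt.differentiableWithinAt
    · intro x hx
      rw [interior_Ici] at hx
      have hx0 : 0 < x := hx
      rw [(hder x).deriv]
      have hlog : Real.log c < 0 := Real.log_neg hc0 hc1
      have hckc : c ^ k ≤ c := by
        have h1 := Real.rpow_le_rpow_of_exponent_ge hc0 hc1.le hk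
        rwa [Real.rpow_one] at h1
      have hle : c ^ (k * x) / (1 - c ^ k) ≤ c ^ x / (1 - c) := by
        apply div_le_div₀ (Real.rpow_nonneg hc0.le x) _ hd1 (by linarith)
        exact Real.rpow_le_rpow_of_exponent_ge hc0 hc1.le (le_mul_of_one_le_left hx0.le hk)
      have heq : c ^ x * Real.log c / (m * (1 - c)) - c ^ (k * x) * Real.log c * k / (m * k * (1 - c ^ k))
          = (Real.log c / m) * (c ^ x / (1 - c) - c ^ (k * x) / (1 - c ^ k)) := by
        field_simp
      rw [heq]
      exact mul_nonpos_of_nonpos_of_nonneg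
        (div_nonpos_of_nonpos_of_nonneg hlog.le hm.le) (by linarith)
  have h := hanti (Set.mem_Ici.2 ha) (Set.mem_Ici.2 (ha.trans hab)) hab
  simp only [hf] at h
  linarith [h]


lemma sumA (q x : ℝ) (hq0 : 0 < q) (hq1 : q < 1) (hx : 0 < x) :
    Summable (fun n : ℕ => q ^ (((n : ℝ) + 1) * x) / (((n : ℝ) + 1) * (1 - q ^ (n + 1)))) := by
  have h1q : 0 < 1 - q := by linarith
  have hr0 : 0 ≤ q ^ x := Real.rpow_nonneg hq0.le x
  have hr1 : q ^ x < 1 := Real.rpow_lt_one hq0.le hq1 hx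
  have hsum : Summable (fun n : ℕ => (q ^ x) ^ (n + 1) / (1 - q)) := by
    apply Summable.div_const
    have := (summable_geometric_of_lt_one hr0 hr1).mul_left (q ^ x)
    simpa [pow_succ, mul_comm] using this
  apply Summable.of_nonneg_of_le _ _ hsum
  · intro n
    have hm0 : (0:ℝ) ≤ (n : ℝ) + 1 := by positivity
    have hqn : q ^ (n + 1) ≤ 1 := pow_le_one₀ hq0.le hq1.le
    exact div_nonneg (Real.rpow_nonneg hq0.le _) (mul_nonneg hm0 (by linarith))
  · intro n
    have hm1 : (1:ℝ) ≤ (n : ℝ) + 1 := by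
      have : (0:ℝ) ≤ (n : ℝ) := Nat.cast_nonneg n
      linarith
    have hqn : q ^ (n + 1) ≤ q := pow_le_of_le_one hq0.le hq1.le (Nat.succ_ne_zero n)
    have enum : q ^ (((n : ℝ) + 1) * x) = (q ^ x) ^ (n + 1) := by
      rw [mul_comm, Real.rpow_mul hq0.le, ← Real.rpow_natCast (q ^ x) (n + 1)]
      norm_num
    rw [enum]
    apply div_le_div₀ (pow_nonneg hr0 _) le_rfl h1q
    calc 1 - q ≤ 1 - q ^ (n + 1) := by linarith
    _ ≤ ((n : ℝ) + 1) * (1 - q ^ (n + 1)) := le_mul_of_one_le_left (by linarith) hm1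

lemma sumB (q k x : ℝ) (hq0 : 0 < q) (hq1 : q < 1) (hk : 1 ≤ k) (hx : 0 < x) :
    Summable (fun n : ℕ =>
      q ^ (((n : ℝ) + 1) * k * x) / (((n : ℝ) + 1) * k * (1 - q ^ (((n : ℝ) + 1) * k)))) := by
  have h1q : 0 < 1 - q := by linarith
  have hk0 : 0 < k := lt_of_lt_of_le one_pos hk
  have hkx : 0 < k * x := mul_pos hk0 hx
  have hr0 : 0 ≤ q ^ (k * x) := Real.rpow_nonneg hq0.le _
  have hr1 : q ^ (k * x) < 1 := Real.rpow_lt_one hq0.le hq1 hkx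
  have hsum : Summable (fun n : ℕ => (q ^ (k * x)) ^ (n + 1) / (1 - q)) := by
    apply Summable.div_const
    have := (summable_geometric_of_lt_one hr0 hr1).mul_left (q ^ (k * x))
    simpa [pow_succ, mul_comm] using this
  have hfacts : ∀ n : ℕ, (1:ℝ) ≤ ((n : ℝ) + 1) * k ∧ q ^ (((n : ℝ) + 1) * k) ≤ q := by
    intro n
    have hm1 : (1:ℝ) ≤ (n : ℝ) + 1 := by
      have : (0:ℝ) ≤ (n : ℝ) := Nat.cast_nonneg n
      linarith
    have hmk : (1:ℝ) ≤ ((n : ℝ) + 1) * k := one_le_mul_of_one_le_of_one_le hm1 hk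
    refine ⟨hmk, ?_⟩
    have := Real.rpow_le_rpow_of_exponent_ge hq0 hq1.le hmk
    rwa [Real.rpow_one] at this
  apply Summable.of_nonneg_of_le _ _ hsum
  · intro n
    obtain ⟨hmk, hqmk⟩ := hfacts n
    have hqmk1 : q ^ (((n : ℝ) + 1) * k) ≤ 1 := by linarith
    exact div_nonneg (Real.rpow_nonneg hq0.le _) (mul_nonneg (by linarith) (by linarith))
  · intro n
    obtain ⟨hmk, hqmk⟩ := hfacts n
    have enum : q ^ (((n : ℝ) + 1) * k * x) = (q ^ (k * x)) ^ (n + 1) := by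
      rw [show ((n : ℝ) + 1) * k * x = (k * x) * ((n : ℝ) + 1) by ring,
        Real.rpow_mul hq0.le, ← Real.rpow_natCast (q ^ (k * x)) (n + 1)]
      norm_num
    rw [enum]
    apply div_le_div₀ (pow_nonneg hr0 _) le_rfl h1q
    calc 1 - q ≤ 1 - q ^ (((n : ℝ) + 1) * k) := by linarith
    _ ≤ ((n : ℝ) + 1) * k * (1 - q ^ (((n : ℝ) + 1) * k)) := le_mul_of_one_le_left (by linarith) hmk

theorem stmt9 (g : ℝ → ℝ) (hgpos : ∀ t ∈ Set.Ici (0 : ℝ), 0 < g t)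
    (hgmono : MonotoneOn g (Set.Ici (0 : ℝ)))
    (hgdiff : DifferentiableOn ℝ g (Set.Ici (0 : ℝ)))
    (q : ℝ) (hq : q ∈ Set.Ioo (0 : ℝ) 1) (k : ℝ) (hk : 1 ≤ k)
    (lam mu : ℝ) (hmu : 0 < mu) (hlm : mu ≤ lam) :
    ∀ s t : ℝ, 0 ≤ s → s ≤ t →
      (1 - q) ^ (lam * g t - mu / k * g t) * (Gammaq q (g t)) ^ lam /
          (Gammaqk q k (g t)) ^ mu ≤
        (1 - q) ^ (lam * g s - mu / k * g s) * (Gammaq q (g s)) ^ lam /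
          (Gammaqk q k (g s)) ^ mu := by
  obtain ⟨hq0, hq1⟩ := hq
  have h1q : 0 < 1 - q := by linarith
  have hk0 : 0 < k := lt_of_lt_of_le one_pos hk
  intro s t hs hst
  have ht : (0:ℝ) ≤ t := hs.trans hst
  have ha : 0 < g s := hgpos s hs
  have hb : 0 < g t := hgpos t ht
  have hab : g s ≤ g t := hgmono hs ht hst
  have hGq : ∀ x : ℝ, Gammaq q x = Real.exp (Real.log (1 - q) * (-x) +
      ∑' n : ℕ, q ^ (((n : ℝ) + 1) * x) / (((n : ℝ) + 1) * (1 - q ^ (n + 1)))) := by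
    intro x
    simp only [Gammaq]
    rw [Real.rpow_def_of_pos h1q, ← Real.exp_add]
  have hGqk : ∀ x : ℝ, Gammaqk q k x = Real.exp (Real.log (1 - q) * (-x / k) +
      ∑' n : ℕ, q ^ (((n : ℝ) + 1) * k * x) /
        (((n : ℝ) + 1) * k * (1 - q ^ (((n : ℝ) + 1) * k)))) := by
    intro x
    simp only [Gammaqk]
    rw [Real.rpow_def_of_pos h1q, ← Real.exp_add]
  have hrw : ∀ x : ℝ,
      (1 - q) ^ (lam * x - mu / k * x) * (Gammaq q x) ^ lam / (Gammaqk q k x) ^ mu =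
      Real.exp (lam * (∑' n : ℕ, q ^ (((n : ℝ) + 1) * x) / (((n : ℝ) + 1) * (1 - q ^ (n + 1))))
        - mu * (∑' n : ℕ, q ^ (((n : ℝ) + 1) * k * x) /
            (((n : ℝ) + 1) * k * (1 - q ^ (((n : ℝ) + 1) * k))))) := by
    intro x
    rw [hGq, hGqk, ← Real.exp_mul, ← Real.exp_mul, Real.rpow_def_of_pos h1q,
      ← Real.exp_add, ← Real.exp_sub, Real.exp_eq_exp]
    ring
  rw [hrw (g t), hrw (g s), Real.exp_le_exp]
  have hAs := sumA q (g s) hq0 hq1 ha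
  have hAt := sumA q (g t) hq0 hq1 hb
  have hBs := sumB q k (g s) hq0 hq1 hk ha
  have hBt := sumB q k (g t) hq0 hq1 hk hb
  have termfacts : ∀ n : ℕ, 0 < q ^ ((n : ℝ) + 1) ∧ q ^ ((n : ℝ) + 1) < 1 ∧
      (q : ℝ) ^ (n + 1) = q ^ ((n : ℝ) + 1) ∧ (0:ℝ) < (n : ℝ) + 1 := by
    intro n
    have hm0 : (0:ℝ) < (n : ℝ) + 1 := by positivity
    refine ⟨Real.rpow_pos_of_pos hq0 _, Real.rpow_lt_one hq0.le hq1 hm0, ?_, hm0⟩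
    rw [← Real.rpow_natCast q (n + 1)]
    norm_num
  -- I1 : A(g t) ≤ A(g s)
  have I1 : (∑' n : ℕ, q ^ (((n : ℝ) + 1) * g t) / (((n : ℝ) + 1) * (1 - q ^ (n + 1))))
      ≤ ∑' n : ℕ, q ^ (((n : ℝ) + 1) * g s) / (((n : ℝ) + 1) * (1 - q ^ (n + 1))) := by
    refine Summable.tsum_le_tsum (fun n => ?_) hAt hAs
    obtain ⟨hc0, hc1, e4, hm0⟩ := termfacts n
    have hden : 0 < ((n : ℝ) + 1) * (1 - q ^ (n + 1)) := by
      rw [e4]; exact mul_pos hm0 (by linarith)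
    exact div_le_div₀ (Real.rpow_nonneg hq0.le _)
      (Real.rpow_le_rpow_of_exponent_ge hq0 hq1.le (mul_le_mul_of_nonneg_left hab hm0.le))
      hden le_rfl
  -- I2 : A(g t) + B(g s) ≤ A(g s) + B(g t)
  have I2 : (∑' n : ℕ, q ^ (((n : ℝ) + 1) * g t) / (((n : ℝ) + 1) * (1 - q ^ (n + 1))))
        + (∑' n : ℕ, q ^ (((n : ℝ) + 1) * k * g s) /
            (((n : ℝ) + 1) * k * (1 - q ^ (((n : ℝ) + 1) * k))))
      ≤ (∑' n : ℕ, q ^ (((n : ℝ) + 1) * g s) / (((n : ℝ) + 1) * (1 - q ^ (n + 1))))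
        + (∑' n : ℕ, q ^ (((n : ℝ) + 1) * k * g t) /
            (((n : ℝ) + 1) * k * (1 - q ^ (((n : ℝ) + 1) * k)))) := by
    rw [← Summable.tsum_add hAt hBs, ← Summable.tsum_add hAs hBt]
    refine Summable.tsum_le_tsum (fun n => ?_) (hAt.add hBs) (hAs.add hBt)
    obtain ⟨hc0, hc1, e4, hm0⟩ := termfacts n
    have e1 : ∀ x : ℝ, q ^ (((n : ℝ) + 1) * x) = (q ^ ((n : ℝ) + 1)) ^ x :=
      fun x => Real.rpow_mul hq0.le _ x
    have e2 : ∀ x : ℝ, q ^ (((n : ℝ) + 1) * k * x) = (q ^ ((n : ℝ) + 1)) ^ (k * x) :=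
      fun x => by rw [mul_assoc, Real.rpow_mul hq0.le]
    have e3 : q ^ (((n : ℝ) + 1) * k) = (q ^ ((n : ℝ) + 1)) ^ k := Real.rpow_mul hq0.le _ _
    simp only [e4, e1, e2, e3]
    exact myKey _ k _ hc0 hc1 hk hm0 ha.le hab
  have h1 := mul_nonneg (sub_nonneg.2 hlm) (sub_nonneg.2 I1)
  have h2 := mul_nonneg hmu.le (sub_nonneg.2 I2)
  nlinarith [h1, h2]
end
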